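/- Let ω be an infinite word over a finite alphabet and u a finite word. Then ω|_u is an IP-set if and only if u is a prefix of p*(ω) for some idempotent ultrafilter p on ℕ. -/

import Mathlib

/-- The set of occurrences of the finite word `u` in the infinite word `x`. -/
def Occ {A : Type*} (x : ℕ → A) (u : List A) : Set ℕ :=
  {n | u = (List.range u.length).map fun i => x (n + i)}

/-- `u` is a prefix of the infinite word `x`. -/
def IsPref {A : Type*} (u : List A) (x : ℕ → A) : Prop :=
  u = (List.range u.length).map x

/-- Addition of ultrafilters on ℕ: `A ∈ p + q ↔ {n | A - n ∈ p} ∈ q`. -/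
noncomputable def uAdd (p q : Ultrafilter ℕ) : Ultrafilter ℕ :=
  q.bind fun n => p.map fun m => m + n

/-- `S` is an IP-set: it contains all finite sums of distinct terms of some
strictly increasing sequence of natural numbers. -/
def IPSet (S : Set ℕ) : Prop :=
  ∃ x : ℕ → ℕ, StrictMono x ∧
    ∀ F : Finset ℕ, F.Nonempty → (∑ n ∈ F, x n) ∈ S

open Hindman Filter

attribute [local instance] Ultrafilter.add Ultrafilter.addSemigroup

lemma mem_uAdd' {p q : Ultrafilter ℕ} {A : Set ℕ} :
    A ∈ uAdd p q ↔ {n | {m | m + n ∈ A} ∈ p} ∈ q := by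
  have : A ∈ uAdd p q ↔
      A ∈ Filter.bind ↑q fun n => ↑(p.map fun m => m + n) := Iff.rfl
  rw [this, Filter.mem_bind']
  simp [Ultrafilter.mem_map, Set.preimage]

lemma mem_add' {p q : Ultrafilter ℕ} {A : Set ℕ} :
    A ∈ q + p ↔ {n | {m | n + m ∈ A} ∈ p} ∈ q := by
  have := Ultrafilter.eventually_add q p (· ∈ A)
  simpa [Filter.eventually_iff] using this

lemma uAdd_eq_add (p q : Ultrafilter ℕ) : uAdd p q = q + p := by
  ext A
  rw [mem_uAdd', mem_add']
  have hset : ∀ n, {m | m + n ∈ A} = {m | n + m ∈ A} := fun n => by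
    ext m; rw [Set.mem_setOf_eq, Set.mem_setOf_eq, add_comm]
  simp only [hset]

lemma uAdd_pure (m : ℕ) : uAdd (pure m) (pure m) = pure (m + m) := by
  ext A
  rw [mem_uAdd']
  simp [Ultrafilter.mem_pure]

lemma fin_not_mem {p : Ultrafilter ℕ} (hnp : ∀ m, p ≠ pure m) {s : Set ℕ}
    (hs : s.Finite) : s ∉ p := fun hm => by
  obtain ⟨x, _, hx⟩ := Ultrafilter.eq_pure_of_finite_mem hs hm
  exact hnp x hx

lemma FS_exists_finset {a : Stream' ℕ} : ∀ {m : ℕ}, m ∈ FS a →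
    ∃ F : Finset ℕ, F.Nonempty ∧ m = ∑ i ∈ F, a.get i := by
  intro m h
  induction h with
  | head' a => exact ⟨{0}, Finset.singleton_nonempty 0, by simp [Stream'.head]⟩
  | tail' a m h ih =>
    obtain ⟨F, hF, rfl⟩ := ih
    refine ⟨F.image (· + 1), hF.image _, ?_⟩
    rw [Finset.sum_image (by intro x _ y _ hxy; simp only at hxy; omega)]
    simp [Stream'.get_tail]
  | cons' a m h ih =>
    obtain ⟨F, hF, rfl⟩ := ih
    refine ⟨insert 0 (F.image (· + 1)), Finset.insert_nonempty _ _, ?_⟩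
    rw [Finset.sum_insert (by simp), Finset.sum_image (by intro x _ y _ hxy; simp only at hxy; omega)]
    simp [Stream'.get_tail, Stream'.head]

/-- Every member of a nonprincipal idempotent ultrafilter is an IP set. -/
lemma ipset_of_mem {p : Ultrafilter ℕ} (hp : uAdd p p = p) (hnp : ∀ m, p ≠ pure m)
    {S : Set ℕ} (hS : S ∈ p) : IPSet S := by
  have hp' : p + p = p := by rwa [uAdd_eq_add] at hp
  have h1 : {n : ℕ | 1 ≤ n} ∈ p := by
    have h0 : ({0} : Set ℕ) ∉ p := fin_not_mem hnp (Set.finite_singleton 0)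
    have := (Ultrafilter.compl_mem_iff_notMem).mpr h0
    convert this using 1
    ext n; simp [Nat.one_le_iff_ne_zero]
  obtain ⟨a, ha⟩ := Hindman.exists_FS_of_large p hp' (S ∩ {n | 1 ≤ n})
    (Filter.inter_mem hS h1)
  have hpos : ∀ i, 1 ≤ a.get i := fun i => (ha (Hindman.FS.singleton a i)).2
  -- partial sums
  set T : ℕ → ℕ := fun m => ∑ i ∈ Finset.range m, a.get i with hT
  -- block boundaries
  set c : ℕ → ℕ := fun n => Nat.rec 0 (fun _ cn => cn + T cn + 1) n with hc
  have hcsucc : ∀ n, c (n + 1) = c n + T (c n) + 1 := fun n => rfl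
  have hclt : ∀ n, c n < c (n + 1) := fun n => by rw [hcsucc]; omega
  have hcmono : StrictMono c := strictMono_nat_of_lt_succ hclt
  set x : ℕ → ℕ := fun n => ∑ i ∈ Finset.Ico (c n) (c (n + 1)), a.get i with hx
  have hxle : ∀ n, x n ≤ T (c (n + 1)) := by
    intro n
    apply Finset.sum_le_sum_of_subset
    intro i hi
    simp only [Finset.mem_Ico] at hi
    simp [hi.2]
  have hxge : ∀ n, T (c n) + 1 ≤ x n := by
    intro n
    have hcard : (Finset.Ico (c n) (c (n + 1))).card = T (c n) + 1 := by
      rw [Nat.card_Ico, hcsucc]; omega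
    have h1 : ∑ _i ∈ Finset.Ico (c n) (c (n + 1)), 1 ≤ x n :=
      Finset.sum_le_sum (fun i _ => hpos i)
    simpa [Finset.sum_const, hcard] using h1
  have hxmono : StrictMono x := by
    apply strictMono_nat_of_lt_succ
    intro n
    calc x n ≤ T (c (n + 1)) := hxle n
    _ < T (c (n + 1)) + 1 := Nat.lt_succ_self _
    _ ≤ x (n + 1) := hxge (n + 1)
  refine ⟨x, hxmono, fun F hF => ?_⟩
  have hdisj : (↑F : Set ℕ).PairwiseDisjoint (fun n => Finset.Ico (c n) (c (n + 1))) := by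
    intro n _ m _ hnm
    apply Finset.disjoint_left.mpr
    intro i hi hi'
    simp only [Finset.mem_Ico] at hi hi'
    rcases lt_or_gt_of_ne hnm with h | h
    · have := hcmono.monotone (show n + 1 ≤ m by omega); omega
    · have := hcmono.monotone (show m + 1 ≤ n by omega); omega
  have hsum : ∑ n ∈ F, x n = ∑ i ∈ F.biUnion (fun n => Finset.Ico (c n) (c (n + 1))), a.get i :=
    (Finset.sum_biUnion hdisj).symm
  have hne : (F.biUnion (fun n => Finset.Ico (c n) (c (n + 1)))).Nonempty := by
    obtain ⟨n, hn⟩ := hF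
    exact ⟨c n, Finset.mem_biUnion.mpr ⟨n, hn, by simp [Finset.mem_Ico, hclt n]⟩⟩
  rw [hsum]
  exact (ha (Hindman.FS.finset_sum a _ hne)).1

lemma exists_ultrafilter_of_ipset {S : Set ℕ} (h : IPSet S) :
    ∃ p : Ultrafilter ℕ, uAdd p p = p ∧ (∀ m, p ≠ pure m) ∧ S ∈ p := by
  obtain ⟨x, hx, hsum⟩ := h
  set a : Stream' ℕ := fun n => x (n + 1) with hadef
  have hget : ∀ i, a.get i = x (i + 1) := fun i => rfl
  have hFS : FS a ⊆ S := by
    intro m hm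
    obtain ⟨F, hF, rfl⟩ := FS_exists_finset hm
    have : ∑ i ∈ F, a.get i = ∑ j ∈ F.image (· + 1), x j := by
      rw [Finset.sum_image (by intro p _ q _ hpq; simp only at hpq; omega)]
      rfl
    rw [this]
    exact hsum _ (hF.image _)
  have hpos : ∀ m ∈ FS a, 1 ≤ m := by
    intro m hm
    obtain ⟨F, hF, rfl⟩ := FS_exists_finset hm
    obtain ⟨n, hn⟩ := hF
    have h1 : 1 ≤ a.get n := by
      rw [hget]
      have : x 0 < x (n + 1) := hx (Nat.succ_pos n)
      omega
    exact le_trans h1 (Finset.single_le_sum (fun i _ => Nat.zero_le _) hn)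
  obtain ⟨U, hU, hmem⟩ := Hindman.exists_idempotent_ultrafilter_le_FS a
  have hFSU : FS a ∈ U := hmem
  refine ⟨U, by rw [uAdd_eq_add]; exact hU, ?_, Filter.mem_of_superset hFSU hFS⟩
  intro m hm
  have hmFS : m ∈ FS a := by
    have : FS a ∈ (pure m : Ultrafilter ℕ) := hm ▸ hFSU
    simpa using this
  have hadd : uAdd U U = U := by rw [uAdd_eq_add]; exact hU
  rw [hm, uAdd_pure] at hadd
  have : ({m + m} : Set ℕ) ∈ (pure m : Ultrafilter ℕ) := hadd ▸ Ultrafilter.mem_pure.mpr rfl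
  have hmm : m = m + m := by simpa using this
  have := hpos m hmFS
  omega

section Nu

variable {A : Type*} [Fintype A]

lemma nuEx (p : Ultrafilter ℕ) (ω : ℕ → A) (i : ℕ) : ∃ a : A, {n | ω (n + i) = a} ∈ p := by
  obtain ⟨a, ha⟩ := Ultrafilter.eq_pure_of_finite (p.map fun n => ω (n + i))
  refine ⟨a, ?_⟩
  have : ({a} : Set A) ∈ p.map fun n => ω (n + i) := ha ▸ Ultrafilter.mem_pure.mpr rfl
  rw [Ultrafilter.mem_map] at this
  have hseteq : ((fun n => ω (n + i)) ⁻¹' {a}) = {n | ω (n + i) = a} := by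
    ext n; simp
  rwa [hseteq] at this

noncomputable def nu (p : Ultrafilter ℕ) (ω : ℕ → A) : ℕ → A :=
  fun i => (nuEx p ω i).choose

lemma nu_mem (p : Ultrafilter ℕ) (ω : ℕ → A) (i : ℕ) :
    {n | ω (n + i) = nu p ω i} ∈ p := (nuEx p ω i).choose_spec

lemma nu_unique {p : Ultrafilter ℕ} {ω : ℕ → A} {i : ℕ} {a : A}
    (h : {n | ω (n + i) = a} ∈ p) : a = nu p ω i := by
  by_contra hne
  have hint : ({n | ω (n + i) = a} ∩ {n | ω (n + i) = nu p ω i} : Set ℕ) ∈ p :=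
    Filter.inter_mem h (nu_mem p ω i)
  obtain ⟨n, hn1, hn2⟩ := Ultrafilter.nonempty_of_mem hint
  exact hne (hn1 ▸ hn2)

lemma list_eq_map_range {v : List A} {f : ℕ → A} :
    v = (List.range v.length).map f ↔ ∀ i : Fin v.length, v.get i = f i := by
  constructor
  · intro h i
    conv_lhs => rw [List.get_of_eq h]
    simp
  · intro h
    apply List.ext_get (by simp)
    intro i h1 h2
    rw [h ⟨i, h1⟩]
    simp

lemma isPref_nu_iff (p : Ultrafilter ℕ) (ω : ℕ → A) (v : List A) :
    IsPref v (nu p ω) ↔ Occ ω v ∈ p := by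
  have hOcc : Occ ω v = ⋂ i : Fin v.length, {n | ω (n + i) = v.get i} := by
    ext n
    simp only [Occ, Set.mem_setOf_eq, Set.mem_iInter, list_eq_map_range]
    exact ⟨fun h i => (h i).symm, fun h i => (h i).symm⟩
  have hmemO : Occ ω v ∈ p ↔ ∀ i : Fin v.length, {n | ω (n + i) = v.get i} ∈ p := by
    rw [hOcc]
    exact Filter.iInter_mem
  rw [hmemO, IsPref, list_eq_map_range]
  constructor
  · intro h i
    rw [h i]
    exact nu_mem p ω i
  · intro h i
    exact nu_unique (h i)

end Nu

theorem stmt_6 {A : Type*} [Fintype A] (ω : ℕ → A) (u : List A) :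
    IPSet (Occ ω u) ↔
      ∃ p : Ultrafilter ℕ, uAdd p p = p ∧ (∀ m : ℕ, p ≠ pure m) ∧
        ∃ ν : ℕ → A, (∀ v : List A, IsPref v ν ↔ Occ ω v ∈ p) ∧ IsPref u ν := by
  constructor
  · intro h
    obtain ⟨p, hp, hnp, hS⟩ := exists_ultrafilter_of_ipset h
    exact ⟨p, hp, hnp, nu p ω, fun v => isPref_nu_iff p ω v, (isPref_nu_iff p ω u).mpr hS⟩
  · rintro ⟨p, hp, hnp, ν, hν, hu⟩
    exact ipset_of_mem hp hnp ((hν u).mp hu)
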